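/- Let γ₁ : I₁ → ℝ² and γ₂ : I₂ → ℝ² be C² curves on open intervals containing 0, and define f : I₁ × I₂ → ℝ³ by f(u,v) = (γ₁(u) + γ₂(v), z(u,v)), where z(u,v) = det[γ₁(u), γ₂(v)] + ∫₀ᵘ det[γ₁(k), γ₁′(k)]dk − ∫₀ᵛ det[γ₂(k), γ₂′(k)]dk. Set ω(u,v) = det[γ₁′(u), γ₂′(v)], A(u) = det[γ₁′(u), γ₁″(u)], B(v) = det[γ₂″(v), γ₂′(v)], and e₃ = (0,0,1) ∈ ℝ³. Then: (a) ∂_u∂_v f = ω · e₃ everywhere on I₁ × I₂; (b) det[∂_u f, ∂_v f, e₃] = ω everywhere (3×3 determinant of the columns ∂_u f, ∂_v f, e₃); (c) at every point where ω ≠ 0, ω · ∂_u² f = det[γ₁″(u), γ₂′(v)] · ∂_u f + A(u) · ∂_v f and ω · ∂_v² f = B(v) · ∂_u f + det[γ₁′(u), γ₂″(v)] · ∂_v f. Hence wherever ω ≠ 0, f satisfies the Blaschke structure equations of an indefinite improper affine sphere in asymptotic coordinates with constant affine normal e₃, affine metric 2ω du dv and cubic form A du³ + B dv³. -/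

import Mathlib

/-- Determinant of the `2×2` matrix with columns `a`, `b` in `ℝ²`. -/
def det2 (a b : ℝ × ℝ) : ℝ := a.1 * b.2 - a.2 * b.1

/-- The representation formula: from two plane curves `γ₁`, `γ₂` and the height `z`, the map
`f = (γ₁ + γ₂, z)` satisfies the Blaschke structure equations of an indefinite improper affine
sphere in asymptotic coordinates with constant affine normal `e₃ = (0,0,1)`, affine metric
`2ω du dv` and cubic form `A du³ + B dv³`. -/

lemma hasDerivAt_fst' {g : ℝ → ℝ × ℝ} {g' : ℝ × ℝ} {t : ℝ} (h : HasDerivAt g g' t) :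
    HasDerivAt (fun t => (g t).1) g'.1 t := by
  simpa using (h.hasFDerivAt.fst).hasDerivAt

lemma hasDerivAt_snd' {g : ℝ → ℝ × ℝ} {g' : ℝ × ℝ} {t : ℝ} (h : HasDerivAt g g' t) :
    HasDerivAt (fun t => (g t).2) g'.2 t := by
  simpa using (h.hasFDerivAt.snd).hasDerivAt

lemma det2_hasDerivAt {a b : ℝ → ℝ × ℝ} {a' b' : ℝ × ℝ} {t : ℝ}
    (ha : HasDerivAt a a' t) (hb : HasDerivAt b b' t) :
    HasDerivAt (fun t => det2 (a t) (b t)) (det2 a' (b t) + det2 (a t) b') t := by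
  simp only [det2]
  have := ((hasDerivAt_fst' ha).mul (hasDerivAt_snd' hb)).sub
    ((hasDerivAt_snd' ha).mul (hasDerivAt_fst' hb))
  exact this.congr_deriv (by ring)

lemma det2_continuousOn {a b : ℝ → ℝ × ℝ} {s : Set ℝ}
    (ha : ContinuousOn a s) (hb : ContinuousOn b s) :
    ContinuousOn (fun t => det2 (a t) (b t)) s := by
  simp only [det2]
  exact (ha.fst.mul hb.snd).sub (ha.snd.mul hb.fst)

open intervalIntegral in
lemma curve_facts {I : Set ℝ} (hI : IsOpen I) (hIc : I.OrdConnected) (h0 : (0:ℝ) ∈ I)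
    {γ : ℝ → ℝ × ℝ} (hγ : ContDiffOn ℝ 2 γ I) :
    (∀ u ∈ I, HasDerivAt γ (deriv γ u) u) ∧
    (∀ u ∈ I, HasDerivAt (deriv γ) (deriv (deriv γ) u) u) ∧
    (∀ u ∈ I, HasDerivAt (fun x => ∫ k in (0:ℝ)..x, det2 (γ k) (deriv γ k))
      (det2 (γ u) (deriv γ u)) u) := by
  have hγ' : ContDiffOn ℝ 1 (deriv γ) I := hγ.deriv_of_isOpen hI (by norm_num)
  have hd1 : ∀ u ∈ I, HasDerivAt γ (deriv γ u) u := fun u hu =>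
    ((hγ.contDiffAt (hI.mem_nhds hu)).differentiableAt (by norm_num)).hasDerivAt
  have hd2 : ∀ u ∈ I, HasDerivAt (deriv γ) (deriv (deriv γ) u) u := fun u hu =>
    ((hγ'.contDiffAt (hI.mem_nhds hu)).differentiableAt (by norm_num)).hasDerivAt
  have hcg : ContinuousOn (fun k => det2 (γ k) (deriv γ k)) I :=
    det2_continuousOn hγ.continuousOn hγ'.continuousOn
  refine ⟨hd1, hd2, fun u hu => ?_⟩
  exact integral_hasDerivAt_right
    ((hcg.mono (hIc.uIcc_subset h0 hu)).intervalIntegrable)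
    (hcg.stronglyMeasurableAtFilter hI u hu)
    (hcg.continuousAt (hI.mem_nhds hu))


theorem stmt6 (I₁ I₂ : Set ℝ) (hI₁ : IsOpen I₁) (hI₂ : IsOpen I₂)
    (hI₁c : I₁.OrdConnected) (hI₂c : I₂.OrdConnected) (h0₁ : (0:ℝ) ∈ I₁) (h0₂ : (0:ℝ) ∈ I₂)
    (γ₁ γ₂ : ℝ → ℝ × ℝ) (hγ₁ : ContDiffOn ℝ 2 γ₁ I₁) (hγ₂ : ContDiffOn ℝ 2 γ₂ I₂)
    (z : ℝ → ℝ → ℝ)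
    (hz : ∀ u v, z u v = det2 (γ₁ u) (γ₂ v)
      + (∫ k in (0:ℝ)..u, det2 (γ₁ k) (deriv γ₁ k))
      - ∫ k in (0:ℝ)..v, det2 (γ₂ k) (deriv γ₂ k))
    (f : ℝ → ℝ → (Fin 3 → ℝ))
    (hf : ∀ u v, f u v = ![(γ₁ u).1 + (γ₂ v).1, (γ₁ u).2 + (γ₂ v).2, z u v])
    (ω : ℝ → ℝ → ℝ) (A B : ℝ → ℝ)
    (hω : ∀ u v, ω u v = det2 (deriv γ₁ u) (deriv γ₂ v))
    (hA : ∀ u, A u = det2 (deriv γ₁ u) (deriv (deriv γ₁) u))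
    (hB : ∀ v, B v = det2 (deriv (deriv γ₂) v) (deriv γ₂ v))
    (e₃ : Fin 3 → ℝ) (he₃ : e₃ = ![0, 0, 1]) :
    -- (a) ∂_u∂_v f = ω e₃
    (∀ u ∈ I₁, ∀ v ∈ I₂,
      deriv (fun u' => deriv (fun v' => f u' v') v) u = ω u v • e₃) ∧
    -- (b) det[∂_u f, ∂_v f, e₃] = ω
    (∀ u ∈ I₁, ∀ v ∈ I₂,
      (Matrix.of fun i j =>
        (![deriv (fun u' => f u' v) u, deriv (fun v' => f u v') v, e₃] j) i).det = ω u v) ∧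
    -- (c) the Gauss equations wherever ω ≠ 0
    (∀ u ∈ I₁, ∀ v ∈ I₂, ω u v ≠ 0 →
      ω u v • deriv (fun u' => deriv (fun u'' => f u'' v) u') u
          = det2 (deriv (deriv γ₁) u) (deriv γ₂ v) • deriv (fun u' => f u' v) u
            + A u • deriv (fun v' => f u v') v ∧
      ω u v • deriv (fun v' => deriv (fun v'' => f u v'') v') v
          = B v • deriv (fun u' => f u' v) u
            + det2 (deriv γ₁ u) (deriv (deriv γ₂) v) • deriv (fun v' => f u v') v) := by
  obtain ⟨h1, h1', hF1⟩ := curve_facts hI₁ hI₁c h0₁ hγ₁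
  obtain ⟨h2, h2', hF2⟩ := curve_facts hI₂ hI₂c h0₂ hγ₂
  -- first-order derivative in u
  have hFu : ∀ (v : ℝ), ∀ u ∈ I₁, HasDerivAt
      (fun u' => (![(γ₁ u').1 + (γ₂ v).1, (γ₁ u').2 + (γ₂ v).2,
        det2 (γ₁ u') (γ₂ v) + (∫ k in (0:ℝ)..u', det2 (γ₁ k) (deriv γ₁ k))
          - ∫ k in (0:ℝ)..v, det2 (γ₂ k) (deriv γ₂ k)] : Fin 3 → ℝ))
      (![(deriv γ₁ u).1, (deriv γ₁ u).2,
        det2 (deriv γ₁ u) (γ₂ v) + det2 (γ₁ u) (deriv γ₁ u)]) u := by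
    intro v u hu
    refine hasDerivAt_pi.2 fun i => ?_
    fin_cases i
    · simpa using (hasDerivAt_fst' (h1 u hu)).add_const (γ₂ v).1
    · simpa using (hasDerivAt_snd' (h1 u hu)).add_const (γ₂ v).2
    · have hdet := det2_hasDerivAt (h1 u hu) (hasDerivAt_const u (γ₂ v))
      have h := (hdet.add (hF1 u hu)).sub_const (∫ k in (0:ℝ)..v, det2 (γ₂ k) (deriv γ₂ k))
      simp only [Fin.isValue, Matrix.cons_val_two, Matrix.tail_cons, Matrix.head_cons]
      exact h.congr_deriv (by simp [det2, Matrix.cons_val])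
  -- first-order derivative in v
  have hFv : ∀ (u : ℝ), ∀ v ∈ I₂, HasDerivAt
      (fun v' => (![(γ₁ u).1 + (γ₂ v').1, (γ₁ u).2 + (γ₂ v').2,
        det2 (γ₁ u) (γ₂ v') + (∫ k in (0:ℝ)..u, det2 (γ₁ k) (deriv γ₁ k))
          - ∫ k in (0:ℝ)..v', det2 (γ₂ k) (deriv γ₂ k)] : Fin 3 → ℝ))
      (![(deriv γ₂ v).1, (deriv γ₂ v).2,
        det2 (γ₁ u) (deriv γ₂ v) - det2 (γ₂ v) (deriv γ₂ v)]) v := by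
    intro u v hv
    refine hasDerivAt_pi.2 fun i => ?_
    fin_cases i
    · simpa using (hasDerivAt_fst' (h2 v hv)).const_add (γ₁ u).1
    · simpa using (hasDerivAt_snd' (h2 v hv)).const_add (γ₁ u).2
    · have hdet := det2_hasDerivAt (hasDerivAt_const v (γ₁ u)) (h2 v hv)
      have h := (hdet.add_const (∫ k in (0:ℝ)..u, det2 (γ₁ k) (deriv γ₁ k))).sub (hF2 v hv)
      simp only [Fin.isValue, Matrix.cons_val_two, Matrix.tail_cons, Matrix.head_cons]
      exact h.congr_deriv (by simp [det2, Matrix.cons_val])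
  -- second-order derivative in u of the u-derivative
  have hFuu : ∀ (v : ℝ), ∀ u ∈ I₁, HasDerivAt
      (fun u' => (![(deriv γ₁ u').1, (deriv γ₁ u').2,
        det2 (deriv γ₁ u') (γ₂ v) + det2 (γ₁ u') (deriv γ₁ u')] : Fin 3 → ℝ))
      (![(deriv (deriv γ₁) u).1, (deriv (deriv γ₁) u).2,
        det2 (deriv (deriv γ₁) u) (γ₂ v) + det2 (γ₁ u) (deriv (deriv γ₁) u)]) u := by
    intro v u hu
    refine hasDerivAt_pi.2 fun i => ?_
    fin_cases i
    · simpa using hasDerivAt_fst' (h1' u hu)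
    · simpa using hasDerivAt_snd' (h1' u hu)
    · have ha := det2_hasDerivAt (h1' u hu) (hasDerivAt_const u (γ₂ v))
      have hb := det2_hasDerivAt (h1 u hu) (h1' u hu)
      have h := ha.add hb
      simp only [Fin.isValue, Matrix.cons_val_two, Matrix.tail_cons, Matrix.head_cons]
      exact h.congr_deriv (by simp [det2, Matrix.cons_val]; ring)
  -- second-order derivative in v of the v-derivative
  have hFvv : ∀ (u : ℝ), ∀ v ∈ I₂, HasDerivAt
      (fun v' => (![(deriv γ₂ v').1, (deriv γ₂ v').2,
        det2 (γ₁ u) (deriv γ₂ v') - det2 (γ₂ v') (deriv γ₂ v')] : Fin 3 → ℝ))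
      (![(deriv (deriv γ₂) v).1, (deriv (deriv γ₂) v).2,
        det2 (γ₁ u) (deriv (deriv γ₂) v) - det2 (γ₂ v) (deriv (deriv γ₂) v)]) v := by
    intro u v hv
    refine hasDerivAt_pi.2 fun i => ?_
    fin_cases i
    · simpa using hasDerivAt_fst' (h2' v hv)
    · simpa using hasDerivAt_snd' (h2' v hv)
    · have ha := det2_hasDerivAt (hasDerivAt_const v (γ₁ u)) (h2' v hv)
      have hb := det2_hasDerivAt (h2 v hv) (h2' v hv)
      have h := ha.sub hb
      simp only [Fin.isValue, Matrix.cons_val_two, Matrix.tail_cons, Matrix.head_cons]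
      exact h.congr_deriv (by simp [det2, Matrix.cons_val]; ring)
  -- derivative in u of the v-derivative (for part (a))
  have hFuv : ∀ (v : ℝ), ∀ u ∈ I₁, HasDerivAt
      (fun u' => (![(deriv γ₂ v).1, (deriv γ₂ v).2,
        det2 (γ₁ u') (deriv γ₂ v) - det2 (γ₂ v) (deriv γ₂ v)] : Fin 3 → ℝ))
      (![0, 0, det2 (deriv γ₁ u) (deriv γ₂ v)]) u := by
    intro v u hu
    refine hasDerivAt_pi.2 fun i => ?_
    fin_cases i
    · simpa using hasDerivAt_const u (deriv γ₂ v).1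
    · simpa using hasDerivAt_const u (deriv γ₂ v).2
    · have hdet := det2_hasDerivAt (h1 u hu) (hasDerivAt_const u (deriv γ₂ v))
      have h := hdet.sub_const (det2 (γ₂ v) (deriv γ₂ v))
      simp only [Fin.isValue, Matrix.cons_val_two, Matrix.tail_cons, Matrix.head_cons]
      exact h.congr_deriv (by simp [det2, Matrix.cons_val])
  refine ⟨?_, ?_, ?_⟩
  · -- part (a)
    intro u hu v hv
    simp only [hf, hz, hω, he₃]
    have hinner : (fun u' => deriv (fun v' =>
        (![(γ₁ u').1 + (γ₂ v').1, (γ₁ u').2 + (γ₂ v').2,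
          det2 (γ₁ u') (γ₂ v') + (∫ k in (0:ℝ)..u', det2 (γ₁ k) (deriv γ₁ k))
            - ∫ k in (0:ℝ)..v', det2 (γ₂ k) (deriv γ₂ k)] : Fin 3 → ℝ)) v)
        = fun u' => (![(deriv γ₂ v).1, (deriv γ₂ v).2,
            det2 (γ₁ u') (deriv γ₂ v) - det2 (γ₂ v) (deriv γ₂ v)] : Fin 3 → ℝ) :=
      funext fun u' => (hFv u' v hv).deriv
    rw [hinner, (hFuv v u hu).deriv]
    funext i
    fin_cases i <;> simp
  · -- part (b)
    intro u hu v hv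
    simp only [hf, hz, hω, he₃]
    rw [(hFu v u hu).deriv, (hFv u v hv).deriv]
    simp [Matrix.det_fin_three, det2]
    ring
  · -- part (c)
    intro u hu v hv hω0
    constructor
    · have hev : (fun u' => deriv (fun u'' => f u'' v) u') =ᶠ[nhds u]
          (fun u' => (![(deriv γ₁ u').1, (deriv γ₁ u').2,
            det2 (deriv γ₁ u') (γ₂ v) + det2 (γ₁ u') (deriv γ₁ u')] : Fin 3 → ℝ)) := by
        filter_upwards [hI₁.mem_nhds hu] with x hx
        have := (hFu v x hx).deriv
        rw [← this]
        congr 1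
        funext u''
        rw [hf, hz]
      simp only [hf, hz, hω, hA]
      rw [show (fun u' => deriv (fun u'' =>
          (![(γ₁ u'').1 + (γ₂ v).1, (γ₁ u'').2 + (γ₂ v).2,
            det2 (γ₁ u'') (γ₂ v) + (∫ k in (0:ℝ)..u'', det2 (γ₁ k) (deriv γ₁ k))
              - ∫ k in (0:ℝ)..v, det2 (γ₂ k) (deriv γ₂ k)] : Fin 3 → ℝ)) u')
          = fun u' => deriv (fun u'' => f u'' v) u' by
          funext u'; congr 1; funext u''; rw [hf, hz]]
      rw [hev.deriv_eq, (hFuu v u hu).deriv, (hFu v u hu).deriv, (hFv u v hv).deriv]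
      funext i
      fin_cases i <;> (simp [det2]; ring)
    · have hev : (fun v' => deriv (fun v'' => f u v'') v') =ᶠ[nhds v]
          (fun v' => (![(deriv γ₂ v').1, (deriv γ₂ v').2,
            det2 (γ₁ u) (deriv γ₂ v') - det2 (γ₂ v') (deriv γ₂ v')] : Fin 3 → ℝ)) := by
        filter_upwards [hI₂.mem_nhds hv] with x hx
        have := (hFv u x hx).deriv
        rw [← this]
        congr 1
        funext v''
        rw [hf, hz]
      simp only [hf, hz, hω, hB]
      rw [show (fun v' => deriv (fun v'' =>
          (![(γ₁ u).1 + (γ₂ v'').1, (γ₁ u).2 + (γ₂ v'').2,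
            det2 (γ₁ u) (γ₂ v'') + (∫ k in (0:ℝ)..u, det2 (γ₁ k) (deriv γ₁ k))
              - ∫ k in (0:ℝ)..v'', det2 (γ₂ k) (deriv γ₂ k)] : Fin 3 → ℝ)) v')
          = fun v' => deriv (fun v'' => f u v'') v' by
          funext v'; congr 1; funext v''; rw [hf, hz]]
      rw [hev.deriv_eq, (hFvv u v hv).deriv, (hFu v u hu).deriv, (hFv u v hv).deriv]
      funext i
      fin_cases i <;> (simp [det2]; ring)
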